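/- Let E_X > 0 and let p_l = 1/(1 + e^{2^l/E_X}) for l ∈ ℤ. Then for all integers L₁, L₂ with -L₁ ≤ L₂, the finite sum satisfies Σ_{l = -L₁}^{L₂} 2^l · p_l < E_X. (Hence the choice p_l = 1/(1+e^{2^l/E_X}) satisfies the input mean constraint Σ_{l=-L₁}^{L₂} 2^l p_l ≤ E_X required by the expansion coding scheme.) -/

import Mathlib

private noncomputable def expG (EX : ℝ) (l : ℤ) : ℝ :=
  (2 : ℝ) ^ l / (Real.exp ((2 : ℝ) ^ l / EX) - 1)

private lemma expG_pos (EX : ℝ) (hEX : 0 < EX) (l : ℤ) : 0 < expG EX l := by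
  have h2 : (0 : ℝ) < (2 : ℝ) ^ l := zpow_pos (by norm_num) l
  have hx : 0 < (2 : ℝ) ^ l / EX := div_pos h2 hEX
  have : 1 < Real.exp ((2 : ℝ) ^ l / EX) := by
    rw [← Real.exp_zero]; exact Real.exp_lt_exp.2 hx
  exact div_pos h2 (by linarith)

private lemma expG_lt (EX : ℝ) (hEX : 0 < EX) (l : ℤ) : expG EX l < EX := by
  have h2 : (0 : ℝ) < (2 : ℝ) ^ l := zpow_pos (by norm_num) l
  have hx : 0 < (2 : ℝ) ^ l / EX := div_pos h2 hEX
  have hlt : (2 : ℝ) ^ l / EX + 1 < Real.exp ((2 : ℝ) ^ l / EX) :=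
    Real.add_one_lt_exp (ne_of_gt hx)
  rw [expG, div_lt_iff₀ (by linarith)]
  have := (div_lt_iff₀ hEX).1 (by linarith : (2 : ℝ) ^ l / EX < Real.exp ((2 : ℝ) ^ l / EX) - 1)
  linarith [this]

private lemma summand_eq (EX : ℝ) (hEX : 0 < EX) (l : ℤ) :
    (2 : ℝ) ^ l * (1 / (1 + Real.exp ((2 : ℝ) ^ l / EX))) = expG EX l - expG EX (l + 1) := by
  have h2 : (0 : ℝ) < (2 : ℝ) ^ l := zpow_pos (by norm_num) l
  have hx : 0 < (2 : ℝ) ^ l / EX := div_pos h2 hEX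
  have he1 : 1 < Real.exp ((2 : ℝ) ^ l / EX) := by
    rw [← Real.exp_zero]; exact Real.exp_lt_exp.2 hx
  set E := Real.exp ((2 : ℝ) ^ l / EX) with hE
  have hpow : (2 : ℝ) ^ (l + 1) = 2 * (2 : ℝ) ^ l := by
    rw [zpow_add_one₀ (by norm_num : (2:ℝ) ≠ 0)]; ring
  have hexp2 : Real.exp ((2 : ℝ) ^ (l + 1) / EX) = E * E := by
    rw [hpow, hE, ← Real.exp_add]; ring_nf
  rw [expG, expG, hexp2, hpow]
  have h1 : (1 : ℝ) + E ≠ 0 := by positivity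
  have h2' : E - 1 ≠ 0 := by linarith
  have h3 : E * E - 1 ≠ 0 := by nlinarith
  rw [← hE]
  rw [← sq] at h3 ⊢
  field_simp
  ring

private lemma sum_telescope (EX : ℝ) (hEX : 0 < EX) (a b : ℤ) (h : a ≤ b) :
    ∑ l ∈ Finset.Icc a b, ((2 : ℝ) ^ l * (1 / (1 + Real.exp ((2 : ℝ) ^ l / EX))))
      = expG EX a - expG EX (b + 1) := by
  refine Int.le_induction (motive := fun b _ => ∑ l ∈ Finset.Icc a b,
      ((2 : ℝ) ^ l * (1 / (1 + Real.exp ((2 : ℝ) ^ l / EX)))) = expG EX a - expG EX (b + 1))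
    ?_ ?_ b h
  · rw [Finset.Icc_self, Finset.sum_singleton, summand_eq EX hEX]
  · intro n hn ih
    have hins : Finset.Icc a (n + 1) = insert (n + 1) (Finset.Icc a n) := by
      ext x; simp only [Finset.mem_Icc, Finset.mem_insert]; omega
    rw [hins, Finset.sum_insert (by simp), ih, summand_eq EX hEX]
    ring

/-- The choice `p_l = 1 / (1 + exp (2^l / E_X))` of Bernoulli input parameters in the expansion
coding scheme satisfies the input mean constraint: for all integers `L₁, L₂` with `-L₁ ≤ L₂`,
`∑_{l = -L₁}^{L₂} 2^l p_l < E_X`. -/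
theorem expansion_input_mean_constraint (EX : ℝ) (hEX : 0 < EX) (L1 L2 : ℤ) (h : -L1 ≤ L2) :
    ∑ l ∈ Finset.Icc (-L1) L2, (2 : ℝ) ^ l * (1 / (1 + Real.exp (2 ^ l / EX))) < EX := by
  rw [sum_telescope EX hEX _ _ h]
  have := expG_lt EX hEX (-L1)
  have := expG_pos EX hEX (L2 + 1)
  linarith
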